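/- If Y is uniform on a finite set, then for any finite random variable T, I(Y;T) ≤ I_∞(Y;T) = log(|𝒴| · Pc(Y|T)). -/

import Mathlib

open Real BigOperators

namespace BN

variable {α β γ : Type*}

section Finite
variable [Fintype α] [Fintype β] [Fintype γ]

/-- `q` is a probability mass function on a finite alphabet. -/
def IsPMF (q : α → ℝ) : Prop := (∀ a, 0 ≤ q a) ∧ (∑ a, q a) = 1

/-- `p` is a joint probability mass function. -/
def IsJointPMF (p : α → β → ℝ) : Prop :=
  (∀ a b, 0 ≤ p a b) ∧ (∑ a, ∑ b, p a b) = 1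

/-- `k` is a channel (conditional distribution) from `α` to `γ`. -/
def IsChannel (k : α → γ → ℝ) : Prop :=
  (∀ a c, 0 ≤ k a c) ∧ ∀ a, (∑ c, k a c) = 1

/-- first marginal of a joint pmf -/
def fstM (p : α → β → ℝ) (a : α) : ℝ := ∑ b, p a b

/-- second marginal of a joint pmf -/
def sndM (p : α → β → ℝ) (b : β) : ℝ := ∑ a, p a b

/-- Shannon mutual information (in nats) of a joint pmf. -/
noncomputable def mi (p : α → β → ℝ) : ℝ :=
  ∑ a, ∑ b, p a b * Real.log (p a b / (fstM p a * sndM p b))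

/-- Shannon entropy (in nats). -/
noncomputable def ent (q : α → ℝ) : ℝ := -∑ a, q a * Real.log (q a)

/-- conditional entropy H(X|Y) of the first coordinate given the second. -/
noncomputable def condEnt (p : α → β → ℝ) : ℝ :=
  -∑ a, ∑ b, p a b * Real.log (p a b / sndM p b)

/-- Joint pmf of (X,T) when T is generated from X via channel `k`,
so Y ⊸ X ⊸ T is a Markov chain. -/
noncomputable def jXT (p : α → β → ℝ) (k : α → γ → ℝ) : α → γ → ℝ :=
  fun a c => fstM p a * k a c

/-- Joint pmf of (Y,T) under the Markov chain Y ⊸ X ⊸ T. -/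
noncomputable def jYT (p : α → β → ℝ) (k : α → γ → ℝ) : β → γ → ℝ :=
  fun b c => ∑ a, p a b * k a c

/-- I(X;T) under the Markov chain Y ⊸ X ⊸ T. -/
noncomputable def miXT (p : α → β → ℝ) (k : α → γ → ℝ) : ℝ := mi (jXT p k)

/-- I(Y;T) under the Markov chain Y ⊸ X ⊸ T. -/
noncomputable def miYT (p : α → β → ℝ) (k : α → γ → ℝ) : ℝ := mi (jYT p k)

/-- The information bottleneck function. -/
noncomputable def IB (p : α → β → ℝ) (R : ℝ) : ℝ :=
  sSup {v | ∃ (n : ℕ) (k : α → Fin n → ℝ),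
    IsChannel k ∧ miXT p k ≤ R ∧ v = miYT p k}

/-- The privacy funnel function. -/
noncomputable def PF (p : α → β → ℝ) (r : ℝ) : ℝ :=
  sInf {v | ∃ (n : ℕ) (k : α → Fin n → ℝ),
    IsChannel k ∧ r ≤ miXT p k ∧ v = miYT p k}

end Finite

end BN

namespace BN

noncomputable def pcMarg {α : Type*} [Fintype α] (q : α → ℝ) : ℝ := ⨆ a, q a

noncomputable def pcCond {α β : Type*} [Fintype α] [Fintype β] (p : α → β → ℝ) : ℝ :=
  ∑ b, ⨆ a, p a b

/-- if `Y` is uniform, then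
`I(Y;T) ≤ I_∞(Y;T) = log(|𝒴|·Pc(Y|T))`.  Here `p` is the joint pmf of `(Y,T)`. -/
theorem uniform_mi_le_iInfty {α β : Type*} [Fintype α] [Fintype β] [Nonempty α]
    (p : α → β → ℝ) (hp : IsJointPMF p)
    (hunif : ∀ a, fstM p a = 1 / Fintype.card α) :
    Real.log (pcCond p / pcMarg (fstM p)) = Real.log (Fintype.card α * pcCond p) ∧
    mi p ≤ Real.log (Fintype.card α * pcCond p) := by
  classical
  obtain ⟨hpos, hsum⟩ := hp
  set N : ℝ := (Fintype.card α : ℝ) with hNdef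
  have hN : (0:ℝ) < N := by
    simp only [hNdef, Nat.cast_pos]
    exact Fintype.card_pos
  set s : β → ℝ := sndM p with hsdef
  set M : β → ℝ := fun b => ⨆ a, p a b with hMdef
  have hs0 : ∀ b, 0 ≤ s b := fun b => Finset.sum_nonneg fun a _ => hpos a b
  have hMge : ∀ a b, p a b ≤ M b := fun a b =>
    le_ciSup (f := fun a => p a b) (Set.Finite.bddAbove (Set.finite_range _)) a
  have hM0 : ∀ b, 0 ≤ M b := fun b => le_trans (hpos (Classical.arbitrary α) b)
    (hMge (Classical.arbitrary α) b)
  have hsM : ∀ b, s b ≤ N * M b := by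
    intro b
    have : s b ≤ ∑ _a : α, M b := Finset.sum_le_sum fun a _ => hMge a b
    simpa [mul_comm] using this
  have hszero : ∀ b, s b = 0 → ∀ a, p a b = 0 := by
    intro b hb a
    have := (Finset.sum_eq_zero_iff_of_nonneg (fun a _ => hpos a b)).mp hb
    exact this a (Finset.mem_univ a)
  have hssum : ∑ b, s b = 1 := by
    rw [← hsum, Finset.sum_comm]; rfl
  have hpcM : pcMarg (fstM p) = 1 / N := by
    unfold pcMarg
    simp [hunif, hNdef]
  constructor
  · rw [hpcM]
    congr 1
    rw [div_div_eq_mul_div, div_one, mul_comm]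
  · -- the mutual information bound
    set t : Finset β := Finset.univ.filter (fun b => s b ≠ 0) with htdef
    have hmemt : ∀ b ∈ t, 0 < s b := by
      intro b hb
      have := (Finset.mem_filter.mp hb).2
      exact lt_of_le_of_ne (hs0 b) (Ne.symm this)
    have hMt : ∀ b ∈ t, 0 < M b := by
      intro b hb
      have h1 := hmemt b hb
      have h2 := hsM b
      nlinarith
    have hst : ∑ b ∈ t, s b = 1 := by
      rw [htdef, Finset.sum_filter_ne_zero, hssum]
    -- step 1: mi p ≤ ∑ b ∈ t, s b * log (N * M b / s b)
    have step1 : mi p ≤ ∑ b ∈ t, s b * Real.log (N * M b / s b) := by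
      unfold mi
      rw [Finset.sum_comm]
      calc ∑ b, ∑ a, p a b * Real.log (p a b / (fstM p a * sndM p b))
          = ∑ b ∈ t, ∑ a, p a b * Real.log (p a b / (fstM p a * sndM p b)) := by
            rw [htdef]
            rw [eq_comm]
            apply Finset.sum_filter_of_ne
            intro b _ hb
            by_contra hc
            apply hb
            apply Finset.sum_eq_zero
            intro a _
            rw [hszero b hc a]; ring
        _ ≤ ∑ b ∈ t, ∑ a, p a b * Real.log (N * M b / s b) := by
            apply Finset.sum_le_sum
            intro b hb
            apply Finset.sum_le_sum
            intro a _
            rcases eq_or_lt_of_le (hpos a b) with h | h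
            · rw [← h]; simp
            · have hb' : (0:ℝ) < sndM p b := hmemt b hb
              apply mul_le_mul_of_nonneg_left _ (hpos a b)
              apply Real.log_le_log
              · rw [hunif a]
                exact div_pos h (mul_pos (one_div_pos.mpr hN) hb')
              · rw [hunif a]
                rw [div_le_div_iff₀ (mul_pos (one_div_pos.mpr hN) hb') hb']
                have hM := hMge a b
                calc p a b * sndM p b ≤ M b * sndM p b := by nlinarith
                  _ = N * M b * (1 / N * sndM p b) := by
                      field_simp
        _ = ∑ b ∈ t, s b * Real.log (N * M b / s b) := by
            apply Finset.sum_congr rfl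
            intro b _
            rw [← Finset.sum_mul]
            rfl
    -- step 2: Jensen
    have step2 : ∑ b ∈ t, s b * Real.log (N * M b / s b)
        ≤ Real.log (∑ b ∈ t, s b * (N * M b / s b)) := by
      have := ConcaveOn.le_map_sum (strictConcaveOn_log_Ioi.concaveOn)
        (t := t) (w := s) (p := fun b => N * M b / s b)
        (fun b hb => (hmemt b hb).le) hst
        (fun b hb => by
          have := hMt b hb
          have := hmemt b hb
          exact Set.mem_Ioi.mpr (by positivity))
      simpa [smul_eq_mul] using this
    have hsimp : ∑ b ∈ t, s b * (N * M b / s b) = N * ∑ b ∈ t, M b := by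
      rw [Finset.mul_sum]
      apply Finset.sum_congr rfl
      intro b hb
      field_simp [(hmemt b hb).ne']
    have htne : t.Nonempty := by
      by_contra hc
      rw [Finset.not_nonempty_iff_eq_empty] at hc
      rw [hc, Finset.sum_empty] at hst
      norm_num at hst
    have hpos2 : 0 < N * ∑ b ∈ t, M b := by
      obtain ⟨b0, hb0⟩ := htne
      have : 0 < ∑ b ∈ t, M b :=
        Finset.sum_pos' (fun b hb => (hMt b hb).le) ⟨b0, hb0, hMt b0 hb0⟩
      positivity
    have step3 : Real.log (N * ∑ b ∈ t, M b) ≤ Real.log (N * pcCond p) := by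
      apply Real.log_le_log hpos2
      apply mul_le_mul_of_nonneg_left _ hN.le
      apply Finset.sum_le_sum_of_subset_of_nonneg (Finset.filter_subset _ _)
      intro b _ _
      exact hM0 b
    calc mi p ≤ ∑ b ∈ t, s b * Real.log (N * M b / s b) := step1
      _ ≤ Real.log (∑ b ∈ t, s b * (N * M b / s b)) := step2
      _ = Real.log (N * ∑ b ∈ t, M b) := by rw [hsimp]
      _ ≤ Real.log (N * pcCond p) := step3
end BN
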